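/- Let w₁, w₂, w₃, h₁, h₂, h₃ be positive real numbers, and suppose there exist rationals (r₁, r₂, r₃) ≠ (0,0,0) with r₁h₁/w₁ + r₂h₂/w₂ + r₃h₃/w₃ = 0, such that every rational triple (q₁,q₂,q₃) with q₁h₁/w₁ + q₂h₂/w₂ + q₃h₃/w₃ = 0 is a rational multiple of (r₁,r₂,r₃). Then the closure of the image of the line {s·(h₁,h₂,h₃) : s ∈ ℝ} in the torus (ℝ/w₁ℤ) × (ℝ/w₂ℤ) × (ℝ/w₃ℤ) equals the image in this torus of the plane {(x₁,x₂,x₃) ∈ ℝ³ : r₁x₁/w₁ + r₂x₂/w₂ + r₃x₃/w₃ = 0}. -/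

import Mathlib

open Filter Topology



lemma dense_aux19 (θ : ℝ) (hθ : ∀ t : ℚ, (t : ℝ) ≠ θ) :
    Dense {x : ℝ | ∃ p q : ℤ, x = (p : ℝ) - (q : ℝ) * θ} := by
  set A : AddSubgroup ℝ :=
    { carrier := {x : ℝ | ∃ p q : ℤ, x = (p : ℝ) - (q : ℝ) * θ}
      zero_mem' := ⟨0, 0, by simp⟩
      add_mem' := by
        rintro x y ⟨p, q, rfl⟩ ⟨p', q', rfl⟩
        exact ⟨p + p', q + q', by push_cast; ring⟩
      neg_mem' := by
        rintro x ⟨p, q, rfl⟩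
        exact ⟨-p, -q, by push_cast; ring⟩ } with hA
  rcases AddSubgroup.dense_or_cyclic A with hd | ⟨a, ha⟩
  · exact hd
  · exfalso
    have h1 : (1:ℝ) ∈ A := ⟨1, 0, by norm_num⟩
    have h2 : -θ ∈ A := ⟨0, 1, by norm_num⟩
    rw [ha, AddSubgroup.mem_closure_singleton] at h1 h2
    obtain ⟨m, hm⟩ := h1
    obtain ⟨k, hk⟩ := h2
    rw [zsmul_eq_mul] at hm hk
    have hm0 : (m:ℝ) ≠ 0 := by
      intro h
      rw [h, zero_mul] at hm
      norm_num at hm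
    apply hθ (-(k : ℚ)/(m : ℚ))
    have ha1 : a = 1 / (m:ℝ) := by field_simp; linarith [hm]
    push_cast
    rw [ha1] at hk
    field_simp at hk ⊢
    linarith [hk]



lemma aux19 (w1 w2 w3 h1 h2 h3 : ℝ)
    (hw1 : 0 < w1) (hw2 : 0 < w2) (hw3 : 0 < w3)
    (hh1 : 0 < h1) (hh2 : 0 < h2) (hh3 : 0 < h3)
    (r1 r2 r3 : ℚ) (hr1 : r1 ≠ 0) (hr2 : r2 ≠ 0)
    (hrel : (r1 : ℝ) * h1 / w1 + (r2 : ℝ) * h2 / w2 + (r3 : ℝ) * h3 / w3 = 0)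
    (huniq : ∀ q1 q2 q3 : ℚ,
      (q1 : ℝ) * h1 / w1 + (q2 : ℝ) * h2 / w2 + (q3 : ℝ) * h3 / w3 = 0 →
      ∃ c : ℚ, q1 = c * r1 ∧ q2 = c * r2 ∧ q3 = c * r3)
    (x1 x2 x3 : ℝ)
    (hx : (r1 : ℝ) * x1 / w1 + (r2 : ℝ) * x2 / w2 + (r3 : ℝ) * x3 / w3 = 0) :
    ∃ (s : ℕ → ℝ) (a b c : ℕ → ℤ),
      Tendsto (fun n => s n * h1 + (a n : ℝ) * w1) atTop (𝓝 x1) ∧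
      Tendsto (fun n => s n * h2 + (b n : ℝ) * w2) atTop (𝓝 x2) ∧
      Tendsto (fun n => s n * h3 + (c n : ℝ) * w3) atTop (𝓝 x3) := by
  have hw1' := hw1.ne'
  have hw2' := hw2.ne'
  have hw3' := hw3.ne'
  have hh3' := hh3.ne'
  have hR1 : (r1 : ℝ) ≠ 0 := by exact_mod_cast hr1
  have hR2 : (r2 : ℝ) ≠ 0 := by exact_mod_cast hr2
  -- the ratio θ = μ2/μ3 is irrational
  have hθ : ∀ t : ℚ, (t : ℝ) ≠ h2 * w3 / (h3 * w2) := by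
    intro t ht
    obtain ⟨c, hc1, hc2, _⟩ := huniq 0 1 (-t) (by
      push_cast
      rw [ht]
      field_simp
      ring)
    have hc0 : c = 0 := by
      rcases mul_eq_zero.mp hc1.symm with h | h
      · exact h
      · exact absurd h hr1
    rw [hc0, zero_mul] at hc2
    exact one_ne_zero hc2
  -- clear denominators in hrel and hx
  have hrel' := hrel
  have hx' := hx
  field_simp at hrel' hx'
  -- integer vector proportional to (r1, r2, r3)
  obtain ⟨n1, n2, n3, D, hD0, hN1, hN2, hN3⟩ :
      ∃ (n1 n2 n3 : ℤ) (D : ℝ), D ≠ 0 ∧ ((n1:ℝ) = (r1:ℝ) * D ∧ (n2:ℝ) = (r2:ℝ) * D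
        ∧ (n3:ℝ) = (r3:ℝ) * D) := by
    refine ⟨r1.num * (r2.den:ℤ) * (r3.den:ℤ), (r1.den:ℤ) * r2.num * (r3.den:ℤ),
      (r1.den:ℤ) * (r2.den:ℤ) * r3.num, (r1.den:ℝ) * (r2.den:ℝ) * (r3.den:ℝ), ?_, ?_, ?_, ?_⟩
    · refine mul_ne_zero (mul_ne_zero ?_ ?_) ?_ <;>
        exact Nat.cast_ne_zero.mpr (Rat.den_ne_zero _)
    · push_cast
      rw [Rat.cast_def]
      have : ((r1.den:ℝ)) ≠ 0 := Nat.cast_ne_zero.mpr (Rat.den_ne_zero _)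
      field_simp
    · push_cast
      rw [Rat.cast_def]
      have : ((r2.den:ℝ)) ≠ 0 := Nat.cast_ne_zero.mpr (Rat.den_ne_zero _)
      field_simp
    · push_cast
      rw [Rat.cast_def]
      have : ((r3.den:ℝ)) ≠ 0 := Nat.cast_ne_zero.mpr (Rat.den_ne_zero _)
      field_simp
  have hrelN : (n1:ℝ) * h1 * w2 * w3 + (n2:ℝ) * h2 * w1 * w3 + (n3:ℝ) * h3 * w1 * w2 = 0 := by
    rw [hN1, hN2, hN3]
    linear_combination D * hrel'
  set α : ℝ := x3 / h3 with hα
  set β : ℝ := (x1 - α * h1) / ((r2:ℝ) * w1) with hβ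
  obtain ⟨u, hu_mem, hu_lim⟩ := mem_closure_iff_seq_limit.mp
    (dense_aux19 (h2 * w3 / (h3 * w2)) hθ (β / D))
  choose p q hpq using hu_mem
  refine ⟨fun n => α + (q n : ℝ) * (n1:ℝ) * w3 / h3,
      fun n => p n * n2 + q n * n3,
      fun n => -(p n * n1),
      fun n => -(q n * n1), ?_, ?_, ?_⟩
  · have base : Tendsto (fun n => α * h1 + (w1 * (n2:ℝ)) * u n) atTop
        (𝓝 (α * h1 + (w1 * (n2:ℝ)) * (β / D))) :=
      ((hu_lim.const_mul _).const_add _)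
    have hval : α * h1 + (w1 * (n2:ℝ)) * (β / D) = x1 := by
      rw [hN2, hβ]
      field_simp
      ring
    rw [hval] at base
    refine base.congr fun n => ?_
    rw [hpq n]
    push_cast
    have hid : (n3:ℝ) * w1 = -((n1:ℝ) * w3 * h1 / h3) - w1 * (n2:ℝ) * (h2 * w3 / (h3 * w2)) := by
      field_simp
      linear_combination hrelN
    linear_combination (-(q n : ℝ)) * hid
  · have base : Tendsto (fun n => α * h2 - (w2 * (n1:ℝ)) * u n) atTop
        (𝓝 (α * h2 - (w2 * (n1:ℝ)) * (β / D))) :=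
      ((hu_lim.const_mul _).const_sub _)
    have hval : α * h2 - (w2 * (n1:ℝ)) * (β / D) = x2 := by
      have hcomb : (r1:ℝ) * w2 * (x3 * h1 - h3 * x1) + (r2:ℝ) * w1 * (x3 * h2 - h3 * x2) = 0 := by
        apply mul_left_cancel₀ hw3'
        linear_combination (-h3) * hx' + x3 * hrel'
      have e1 : (w2 * (n1:ℝ)) * (β / D) = w2 * (r1:ℝ) * β := by
        rw [hN1]; field_simp
      rw [e1, hβ, hα]
      field_simp
      linear_combination hcomb
    rw [hval] at base
    refine base.congr fun n => ?_
    rw [hpq n]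
    push_cast
    field_simp
    ring
  · have hc : ∀ n : ℕ, (α + (q n : ℝ) * (n1:ℝ) * w3 / h3) * h3 + ((-(q n * n1) : ℤ) : ℝ) * w3 = x3 := by
      intro n
      push_cast
      rw [hα]
      field_simp
      ring
    exact tendsto_const_nhds.congr fun n => (hc n).symm


lemma addCircle_coe_eq_iff19 {w : ℝ} (x y : ℝ) :
    ((x : AddCircle w) = (y : AddCircle w)) ↔ ∃ k : ℤ, x - y = (k : ℝ) * w := by
  rw [QuotientAddGroup.eq_iff_sub_mem, AddSubgroup.mem_zmultiples_iff]
  constructor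
  · rintro ⟨k, hk⟩; exact ⟨k, by rw [← hk, zsmul_eq_mul]⟩
  · rintro ⟨k, hk⟩; exact ⟨k, by rw [zsmul_eq_mul, ← hk]⟩

lemma conclude19 (w1 w2 w3 h1 h2 h3 : ℝ) (x1 x2 x3 : ℝ)
    (s : ℕ → ℝ) (a b c : ℕ → ℤ)
    (T1 : Tendsto (fun n => s n * h1 + (a n : ℝ) * w1) atTop (𝓝 x1))
    (T2 : Tendsto (fun n => s n * h2 + (b n : ℝ) * w2) atTop (𝓝 x2))
    (T3 : Tendsto (fun n => s n * h3 + (c n : ℝ) * w3) atTop (𝓝 x3)) :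
    (((x1 : ℝ) : AddCircle w1), ((x2 : ℝ) : AddCircle w2), ((x3 : ℝ) : AddCircle w3)) ∈
      closure (Set.range (fun s : ℝ =>
        (((s * h1 : ℝ) : AddCircle w1), ((s * h2 : ℝ) : AddCircle w2),
          ((s * h3 : ℝ) : AddCircle w3)))) := by
  apply mem_closure_iff_seq_limit.mpr
  refine ⟨fun n => (((s n * h1 : ℝ) : AddCircle w1), ((s n * h2 : ℝ) : AddCircle w2),
      ((s n * h3 : ℝ) : AddCircle w3)), fun n => ⟨s n, rfl⟩, ?_⟩
  have C1 : Tendsto (fun n => ((s n * h1 : ℝ) : AddCircle w1)) atTop (𝓝 (x1 : AddCircle w1)) := by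
    refine (((AddCircle.continuous_mk' w1).tendsto x1).comp T1).congr fun n => ?_
    exact (addCircle_coe_eq_iff19 _ _).mpr ⟨a n, by ring⟩
  have C2 : Tendsto (fun n => ((s n * h2 : ℝ) : AddCircle w2)) atTop (𝓝 (x2 : AddCircle w2)) := by
    refine (((AddCircle.continuous_mk' w2).tendsto x2).comp T2).congr fun n => ?_
    exact (addCircle_coe_eq_iff19 _ _).mpr ⟨b n, by ring⟩
  have C3 : Tendsto (fun n => ((s n * h3 : ℝ) : AddCircle w3)) atTop (𝓝 (x3 : AddCircle w3)) := by
    refine (((AddCircle.continuous_mk' w3).tendsto x3).comp T3).congr fun n => ?_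
    exact (addCircle_coe_eq_iff19 _ _).mpr ⟨c n, by ring⟩
  exact C1.prodMk_nhds (C2.prodMk_nhds C3)



lemma intvec19 (r1 r2 r3 : ℚ) :
    ∃ (n1 n2 n3 : ℤ) (D : ℝ), 0 < D ∧ (n1:ℝ) = (r1:ℝ) * D ∧ (n2:ℝ) = (r2:ℝ) * D
      ∧ (n3:ℝ) = (r3:ℝ) * D := by
  refine ⟨r1.num * (r2.den:ℤ) * (r3.den:ℤ), (r1.den:ℤ) * r2.num * (r3.den:ℤ),
    (r1.den:ℤ) * (r2.den:ℤ) * r3.num, (r1.den:ℝ) * (r2.den:ℝ) * (r3.den:ℝ), ?_, ?_, ?_, ?_⟩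
  · have p1 : (0:ℝ) < (r1.den:ℝ) := by exact_mod_cast r1.pos
    have p2 : (0:ℝ) < (r2.den:ℝ) := by exact_mod_cast r2.pos
    have p3 : (0:ℝ) < (r3.den:ℝ) := by exact_mod_cast r3.pos
    positivity
  · push_cast
    rw [Rat.cast_def]
    have : ((r1.den:ℝ)) ≠ 0 := Nat.cast_ne_zero.mpr (Rat.den_ne_zero _)
    field_simp
  · push_cast
    rw [Rat.cast_def]
    have : ((r2.den:ℝ)) ≠ 0 := Nat.cast_ne_zero.mpr (Rat.den_ne_zero _)
    field_simp
  · push_cast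
    rw [Rat.cast_def]
    have : ((r3.den:ℝ)) ≠ 0 := Nat.cast_ne_zero.mpr (Rat.den_ne_zero _)
    field_simp

theorem closed_part19 (w1 w2 w3 : ℝ)
    (hw1 : 0 < w1) (hw2 : 0 < w2) (hw3 : 0 < w3)
    (r1 r2 r3 : ℚ) :
    IsClosed ((fun x : ℝ × ℝ × ℝ =>
          ((x.1 : AddCircle w1), (x.2.1 : AddCircle w2), (x.2.2 : AddCircle w3))) ''
        {x : ℝ × ℝ × ℝ |
          (r1 : ℝ) * x.1 / w1 + (r2 : ℝ) * x.2.1 / w2 + (r3 : ℝ) * x.2.2 / w3 = 0}) := by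
  have hw1' := hw1.ne'
  have hw2' := hw2.ne'
  have hw3' := hw3.ne'
  set π : ℝ × ℝ × ℝ → AddCircle w1 × AddCircle w2 × AddCircle w3 :=
    fun x => ((x.1 : AddCircle w1), (x.2.1 : AddCircle w2), (x.2.2 : AddCircle w3)) with hπ
  have hoq : IsOpenQuotientMap π := by
    have q1 : IsOpenQuotientMap ((↑) : ℝ → AddCircle w1) :=
      QuotientAddGroup.isOpenQuotientMap_mk
    have q2 : IsOpenQuotientMap ((↑) : ℝ → AddCircle w2) :=
      QuotientAddGroup.isOpenQuotientMap_mk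
    have q3 : IsOpenQuotientMap ((↑) : ℝ → AddCircle w3) :=
      QuotientAddGroup.isOpenQuotientMap_mk
    exact q1.prodMap (q2.prodMap q3)
  rw [← hoq.isQuotientMap.isClosed_preimage]
  have hkey : π ⁻¹' (π '' {x : ℝ × ℝ × ℝ |
        (r1 : ℝ) * x.1 / w1 + (r2 : ℝ) * x.2.1 / w2 + (r3 : ℝ) * x.2.2 / w3 = 0})
      = (fun x : ℝ × ℝ × ℝ => (r1 : ℝ) * x.1 / w1 + (r2 : ℝ) * x.2.1 / w2 + (r3 : ℝ) * x.2.2 / w3)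
        ⁻¹' {t : ℝ | ∃ a b c : ℤ, t = (a : ℝ) * r1 + (b : ℝ) * r2 + (c : ℝ) * r3} := by
    ext x
    constructor
    · rintro ⟨y, hy, hxy⟩
      have hy' : (r1 : ℝ) * y.1 / w1 + (r2 : ℝ) * y.2.1 / w2 + (r3 : ℝ) * y.2.2 / w3 = 0 := hy
      have h1 : (y.1 : AddCircle w1) = (x.1 : AddCircle w1) := congrArg Prod.fst hxy
      have h2 : (y.2.1 : AddCircle w2) = (x.2.1 : AddCircle w2) :=
        congrArg (fun z => z.2.1) hxy
      have h3 : (y.2.2 : AddCircle w3) = (x.2.2 : AddCircle w3) :=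
        congrArg (fun z => z.2.2) hxy
      obtain ⟨k1, e1⟩ := (addCircle_coe_eq_iff19 x.1 y.1).mp h1.symm
      obtain ⟨k2, e2⟩ := (addCircle_coe_eq_iff19 x.2.1 y.2.1).mp h2.symm
      obtain ⟨k3, e3⟩ := (addCircle_coe_eq_iff19 x.2.2 y.2.2).mp h3.symm
      refine ⟨k1, k2, k3, ?_⟩
      field_simp at hy' ⊢
      linear_combination hy' + ((r1:ℝ) * w2 * w3) * e1 + ((r2:ℝ) * w1 * w3) * e2
        + ((r3:ℝ) * w1 * w2) * e3
    · rintro ⟨a, b, c, habc⟩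
      have habc' : (r1 : ℝ) * x.1 / w1 + (r2 : ℝ) * x.2.1 / w2 + (r3 : ℝ) * x.2.2 / w3
          = (a : ℝ) * r1 + (b : ℝ) * r2 + (c : ℝ) * r3 := habc
      refine ⟨(x.1 - a * w1, x.2.1 - b * w2, x.2.2 - c * w3), ?_, ?_⟩
      · show (r1 : ℝ) * (x.1 - a * w1) / w1 + (r2 : ℝ) * (x.2.1 - b * w2) / w2
            + (r3 : ℝ) * (x.2.2 - c * w3) / w3 = 0
        field_simp at habc' ⊢
        linear_combination habc'
      · refine Prod.ext ?_ (Prod.ext ?_ ?_)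
        · exact (addCircle_coe_eq_iff19 _ _).mpr ⟨-a, by push_cast; ring⟩
        · exact (addCircle_coe_eq_iff19 _ _).mpr ⟨-b, by push_cast; ring⟩
        · exact (addCircle_coe_eq_iff19 _ _).mpr ⟨-c, by push_cast; ring⟩
  rw [hkey]
  apply IsClosed.preimage (by fun_prop)
  obtain ⟨n1, n2, n3, D, hD, hN1, hN2, hN3⟩ := intvec19 r1 r2 r3
  have hset : {t : ℝ | ∃ a b c : ℤ, t = (a : ℝ) * r1 + (b : ℝ) * r2 + (c : ℝ) * r3}
      = (fun t : ℝ => t * D⁻¹) '' (((↑) : ℤ → ℝ) ''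
          {k : ℤ | ∃ a b c : ℤ, k = a * n1 + b * n2 + c * n3}) := by
    ext t
    constructor
    · rintro ⟨a, b, c, rfl⟩
      refine ⟨((a * n1 + b * n2 + c * n3 : ℤ) : ℝ), ⟨a * n1 + b * n2 + c * n3, ⟨a, b, c, rfl⟩, rfl⟩, ?_⟩
      push_cast
      rw [hN1, hN2, hN3]
      field_simp
    · rintro ⟨_, ⟨_, ⟨a, b, c, rfl⟩, rfl⟩, rfl⟩
      refine ⟨a, b, c, ?_⟩
      push_cast
      rw [hN1, hN2, hN3]
      field_simp
  rw [hset]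
  refine (Homeomorph.isClosedMap (Homeomorph.mulRight₀ D⁻¹ (inv_ne_zero hD.ne')) ) _ ?_
  exact Int.isClosedEmbedding_coe_real.isClosedMap _ (isClosed_discrete _)

theorem stmt_19 (w1 w2 w3 h1 h2 h3 : ℝ)
    (hw1 : 0 < w1) (hw2 : 0 < w2) (hw3 : 0 < w3)
    (hh1 : 0 < h1) (hh2 : 0 < h2) (hh3 : 0 < h3)
    (r1 r2 r3 : ℚ) (hr : (r1, r2, r3) ≠ (0, 0, 0))
    (hrel : (r1 : ℝ) * h1 / w1 + (r2 : ℝ) * h2 / w2 + (r3 : ℝ) * h3 / w3 = 0)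
    (huniq : ∀ q1 q2 q3 : ℚ,
      (q1 : ℝ) * h1 / w1 + (q2 : ℝ) * h2 / w2 + (q3 : ℝ) * h3 / w3 = 0 →
      ∃ c : ℚ, q1 = c * r1 ∧ q2 = c * r2 ∧ q3 = c * r3) :
    closure (Set.range (fun s : ℝ =>
        (((s * h1 : ℝ) : AddCircle w1), ((s * h2 : ℝ) : AddCircle w2),
          ((s * h3 : ℝ) : AddCircle w3))))
      = (fun x : ℝ × ℝ × ℝ =>
          ((x.1 : AddCircle w1), (x.2.1 : AddCircle w2), (x.2.2 : AddCircle w3))) ''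
        {x : ℝ × ℝ × ℝ |
          (r1 : ℝ) * x.1 / w1 + (r2 : ℝ) * x.2.1 / w2 + (r3 : ℝ) * x.2.2 / w3 = 0} := by
  have hzero : ∀ (t : ℚ) (h w : ℝ), 0 < h → 0 < w → (t:ℝ) * h / w = 0 → t = 0 := by
    intro t h w hh hw ht
    rcases div_eq_zero_iff.mp ht with h' | h'
    · rcases mul_eq_zero.mp h' with h'' | h''
      · exact_mod_cast h''
      · exact absurd h'' hh.ne'
    · exact absurd h' hw.ne'
  apply Set.Subset.antisymm
  · apply closure_minimal
    · rintro _ ⟨s, rfl⟩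
      refine ⟨(s * h1, s * h2, s * h3), ?_, rfl⟩
      show (r1:ℝ) * (s * h1) / w1 + (r2:ℝ) * (s * h2) / w2 + (r3:ℝ) * (s * h3) / w3 = 0
      linear_combination s * hrel
    · exact closed_part19 w1 w2 w3 hw1 hw2 hw3 r1 r2 r3
  · rintro _ ⟨x, hx, rfl⟩
    have hx' : (r1:ℝ) * x.1 / w1 + (r2:ℝ) * x.2.1 / w2 + (r3:ℝ) * x.2.2 / w3 = 0 := hx
    by_cases h1z : r1 = 0
    · -- r2 ≠ 0 and r3 ≠ 0
      have h3nz : r3 ≠ 0 := by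
        intro h3z
        have h2z : r2 = 0 := by
          apply hzero r2 h2 w2 hh2 hw2
          rw [h1z, h3z] at hrel
          push_cast at hrel
          linear_combination hrel
        exact hr (by rw [h1z, h2z, h3z])
      have h2nz : r2 ≠ 0 := by
        intro h2z
        have h3z : r3 = 0 := by
          apply hzero r3 h3 w3 hh3 hw3
          rw [h1z, h2z] at hrel
          push_cast at hrel
          linear_combination hrel
        exact hr (by rw [h1z, h2z, h3z])
      obtain ⟨s, a, b, c, T1, T2, T3⟩ :=
        aux19 w2 w3 w1 h2 h3 h1 hw2 hw3 hw1 hh2 hh3 hh1 r2 r3 r1 h2nz h3nz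
          (by linear_combination hrel)
          (fun q1 q2 q3 hq => by
            obtain ⟨d, d1, d2, d3⟩ := huniq q3 q1 q2 (by linear_combination hq)
            exact ⟨d, d2, d3, d1⟩)
          x.2.1 x.2.2 x.1 (by linear_combination hx')
      exact conclude19 w1 w2 w3 h1 h2 h3 x.1 x.2.1 x.2.2 s c a b T3 T1 T2
    · by_cases h2z : r2 = 0
      · have h3nz : r3 ≠ 0 := by
          intro h3z
          apply h1z
          apply hzero r1 h1 w1 hh1 hw1
          rw [h2z, h3z] at hrel
          push_cast at hrel
          linear_combination hrel
        obtain ⟨s, a, b, c, T1, T2, T3⟩ :=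
          aux19 w1 w3 w2 h1 h3 h2 hw1 hw3 hw2 hh1 hh3 hh2 r1 r3 r2 h1z h3nz
            (by linarith)
            (fun q1 q2 q3 hq => by
              obtain ⟨d, d1, d2, d3⟩ := huniq q1 q3 q2 (by linear_combination hq)
              exact ⟨d, d1, d3, d2⟩)
            x.1 x.2.2 x.2.1 (by linear_combination hx')
        exact conclude19 w1 w2 w3 h1 h2 h3 x.1 x.2.1 x.2.2 s a c b T1 T3 T2
      · obtain ⟨s, a, b, c, T1, T2, T3⟩ :=
          aux19 w1 w2 w3 h1 h2 h3 hw1 hw2 hw3 hh1 hh2 hh3 r1 r2 r3 h1z h2z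
            hrel huniq x.1 x.2.1 x.2.2 hx'
        exact conclude19 w1 w2 w3 h1 h2 h3 x.1 x.2.1 x.2.2 s a b c T1 T2 T3
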